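/- arXiv:1407.5061 — 3 statements merged into one kernel-verified Lean document; each statement's English description precedes it below -/
import Mathlib

section
/- For every even integer n ≥ 2, the quantity b_n := 2^{-n} * Σ_{j=0}^{n/2} C(n+1, j)/(n+1-2j) satisfies the recurrence b_n = (n/(n+1)) * b_{n-2} + a_n/(n+1), where a_n := 2^{-n} * C(n, n/2). -/
/-- `a n = binomial(n, n/2) / 2^n` as a rational number. -/
noncomputable def a (n : ℕ) : ℚ := (n.choose (n / 2) : ℚ) / 2 ^ n

/-- `b n = 2^{-n} Σ_{j=0}^{n/2} C(n+1,j)/(n+1-2j)` as a rational number. -/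
noncomputable def b (n : ℕ) : ℚ :=
  (1 / 2 ^ n) * ∑ j ∈ Finset.range (n / 2 + 1),
    ((n + 1).choose j : ℚ) / ((n : ℚ) + 1 - 2 * j)

/-- Telescoping auxiliary function. -/
noncomputable def g (k j : ℕ) : ℚ :=
  -(j : ℚ) * (6 * k + 9 - 2 * j) * ((2 * k + 3).choose j : ℚ)
    / ((2 * (k : ℚ) + 3) ^ 2 * (2 * (k : ℚ) + 3 - 2 * j))

lemma choose_ratio1 (k j : ℕ) (hj : j ≤ 2 * k + 3) :
    ((2 * k + 3).choose (j + 1) : ℚ) * (j + 1)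
      = ((2 * k + 3).choose j : ℚ) * (2 * (k : ℚ) + 3 - j) := by
  have h := congrArg (Nat.cast (R := ℚ)) (Nat.choose_succ_right_eq (2 * k + 3) j)
  push_cast [Nat.cast_sub hj] at h
  linarith

lemma choose_ratio2 (k j : ℕ) (hj : j ≤ 2 * k + 1) :
    ((2 * k + 1).choose j : ℚ) * ((2 * (k : ℚ) + 2) * (2 * (k : ℚ) + 3))
      = ((2 * k + 3).choose j : ℚ) * ((2 * (k : ℚ) + 3 - j) * (2 * (k : ℚ) + 2 - j)) := by
  have h1 := congrArg (Nat.cast (R := ℚ)) (Nat.choose_mul_succ_eq (2 * k + 1) j)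
  have h2 := congrArg (Nat.cast (R := ℚ)) (Nat.choose_mul_succ_eq (2 * k + 2) j)
  rw [show 2 * k + 1 + 1 = 2 * k + 2 from rfl] at h1
  rw [show 2 * k + 2 + 1 = 2 * k + 3 from rfl] at h2
  push_cast [Nat.cast_sub (show j ≤ 2 * k + 2 by omega),
    Nat.cast_sub (show j ≤ 2 * k + 3 by omega)] at h1 h2
  nlinarith [h1, h2]

lemma step (k j : ℕ) (hj : j ≤ k) :
    ((2 * k + 3).choose j : ℚ) / (2 * (k : ℚ) + 3 - 2 * j)
      - (4 * (2 * (k : ℚ) + 2) / (2 * (k : ℚ) + 3))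
        * (((2 * k + 1).choose j : ℚ) / (2 * (k : ℚ) + 1 - 2 * j))
    = g k (j + 1) - g k j := by
  have hjk : (j : ℚ) ≤ k := by exact_mod_cast hj
  have d1 : (2 * (k : ℚ) + 3 - 2 * j) ≠ 0 := by nlinarith
  have d2 : (2 * (k : ℚ) + 1 - 2 * j) ≠ 0 := by nlinarith
  have d3 : (2 * (k : ℚ) + 3) ≠ 0 := by positivity
  have d4 : (2 * (k : ℚ) + 2) ≠ 0 := by positivity
  have d5 : ((j : ℚ) + 1) ≠ 0 := by positivity
  have d6 : (2 * (k : ℚ) + 3 - 2 * ((j : ℚ) + 1)) ≠ 0 := by nlinarith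
  have h1 := choose_ratio1 k j (by omega)
  have h2 := choose_ratio2 k j (by omega)
  have e1 : ((2 * k + 3).choose (j + 1) : ℚ)
      = ((2 * k + 3).choose j : ℚ) * (2 * (k : ℚ) + 3 - j) / (j + 1) := by
    field_simp; linarith
  have e2 : ((2 * k + 1).choose j : ℚ)
      = ((2 * k + 3).choose j : ℚ) * ((2 * (k : ℚ) + 3 - j) * (2 * (k : ℚ) + 2 - j))
        / ((2 * (k : ℚ) + 2) * (2 * (k : ℚ) + 3)) := by
    field_simp; linarith
  rw [g, g, e1, e2]
  push_cast
  field_simp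
  ring

lemma last_term (k : ℕ) :
    g k (k + 1) + ((2 * k + 3).choose (k + 1) : ℚ)
      = ((2 * k + 2).choose (k + 1) : ℚ) / (2 * (k : ℚ) + 3) := by
  have hC := Nat.choose_mul_succ_eq (2 * k + 2) (k + 1)
  rw [show 2 * k + 2 + 1 = 2 * k + 3 from rfl,
    show 2 * k + 3 - (k + 1) = k + 2 from by omega] at hC
  have hCq : ((2 * k + 2).choose (k + 1) : ℚ) * (2 * (k : ℚ) + 3)
      = ((2 * k + 3).choose (k + 1) : ℚ) * ((k : ℚ) + 2) := by exact_mod_cast congrArg (Nat.cast (R := ℚ)) hC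
  rw [g]
  have d3 : (2 * (k : ℚ) + 3) ≠ 0 := by positivity
  push_cast
  rw [show (2 * (k : ℚ) + 3 - 2 * ((k : ℚ) + 1)) = 1 from by ring]
  field_simp
  linear_combination (-1 : ℚ) * hCq

lemma main (k : ℕ) :
    ∑ j ∈ Finset.range (k + 1 + 1), ((2 * k + 3).choose j : ℚ) / (2 * (k : ℚ) + 3 - 2 * j)
      = (4 * (2 * (k : ℚ) + 2) / (2 * (k : ℚ) + 3))
          * ∑ j ∈ Finset.range (k + 1), ((2 * k + 1).choose j : ℚ) / (2 * (k : ℚ) + 1 - 2 * j)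
        + ((2 * k + 2).choose (k + 1) : ℚ) / (2 * (k : ℚ) + 3) := by
  have tel : ∑ j ∈ Finset.range (k + 1), (g k (j + 1) - g k j) = g k (k + 1) - g k 0 :=
    Finset.sum_range_sub (g k) (k + 1)
  have g0 : g k 0 = 0 := by simp [g]
  have hsum : ∑ j ∈ Finset.range (k + 1),
      (((2 * k + 3).choose j : ℚ) / (2 * (k : ℚ) + 3 - 2 * j)
        - (4 * (2 * (k : ℚ) + 2) / (2 * (k : ℚ) + 3))
          * (((2 * k + 1).choose j : ℚ) / (2 * (k : ℚ) + 1 - 2 * j)))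
      = g k (k + 1) := by
    rw [Finset.sum_congr rfl (fun j hj => step k j (by
      simpa using Nat.lt_succ_iff.mp (Finset.mem_range.mp hj))), tel, g0, sub_zero]
  rw [Finset.sum_range_succ]
  have hlast : ((2 * k + 3).choose (k + 1) : ℚ) / (2 * (k : ℚ) + 3 - 2 * ((k : ℚ) + 1))
      = ((2 * k + 3).choose (k + 1) : ℚ) := by
    rw [show (2 * (k : ℚ) + 3 - 2 * ((k : ℚ) + 1)) = 1 from by ring, div_one]
  rw [Finset.sum_sub_distrib, ← Finset.mul_sum] at hsum
  have := last_term k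
  push_cast at hlast ⊢
  linarith [hsum, this, hlast]

theorem stmt_1 (n : ℕ) (hn : 2 ≤ n) (he : Even n) :
    b n = ((n : ℚ) / (n + 1)) * b (n - 2) + a n / (n + 1) := by
  obtain ⟨m, rfl⟩ := he
  obtain ⟨k, rfl⟩ : ∃ k, m = k + 1 := ⟨m - 1, by omega⟩
  have e0 : (k + 1) + (k + 1) - 2 = k + k := by omega
  have e1 : ((k + 1) + (k + 1)) / 2 = k + 1 := by omega
  have e2 : (k + k) / 2 = k := by omega
  rw [b, b, a, e0, e1, e2]
  have ec1 : (k + 1) + (k + 1) + 1 = 2 * k + 3 := by ring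
  have ec2 : k + k + 1 = 2 * k + 1 := by ring
  have ec3 : (k + 1) + (k + 1) = 2 * k + 2 := by ring
  rw [ec1, ec2, ec3]
  have hs1 : ∀ j : ℕ, ((2 * k + 2 : ℕ) : ℚ) + 1 - 2 * j = 2 * (k : ℚ) + 3 - 2 * j := by
    intro j; push_cast; ring
  have hs2 : ∀ j : ℕ, ((k + k : ℕ) : ℚ) + 1 - 2 * j = 2 * (k : ℚ) + 1 - 2 * j := by
    intro j; push_cast; ring
  simp only [hs1, hs2]
  have hm := main k
  have hp : (0 : ℚ) < 2 ^ (k + k) := by positivity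
  have h2 : (2 : ℚ) ^ (2 * k + 2) = 4 * 2 ^ (k + k) := by
    rw [show 2 * k + 2 = (k + k) + 2 from by ring, pow_add]; ring
  have d3 : (2 * (k : ℚ) + 3) ≠ 0 := by positivity
  rw [hm, h2]
  push_cast
  field_simp
  ring
end

section
/- For every even integer n ≥ 2, with a_n := 2^{-n} C(n, n/2) and b_n := 2^{-n} Σ_{j=0}^{n/2} C(n+1,j)/(n+1-2j), one has (n+2) a_{n+2} b_n − n a_n b_{n−2} = a_n^2. -/
open Nat in
noncomputable def f (m t : ℕ) : ℚ :=
  -(((2*m+1).choose t : ℚ)) * t * (6*(m:ℚ)+3-2*t) / ((2*(m:ℚ)+1) * (2*(m:ℚ)+1-2*t))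

lemma term_id (j k : ℕ) :
    (2*(j:ℚ)+2*k+3) * (((2*j+2*k+3).choose j : ℚ)) / (2*(k:ℚ)+3)
      - (8*(j:ℚ)+8*k+8) * (((2*j+2*k+1).choose j : ℚ)) / (2*(k:ℚ)+1)
    = f (j+k+1) (j+1) - f (j+k+1) j := by
  unfold f
  have e : ∀ N : ℕ, (0:ℚ) < (Nat.factorial N : ℚ) := fun N => by
    exact_mod_cast N.factorial_pos
  have hc1 : (((2*j+2*k+3).choose j : ℚ)) =
      (Nat.factorial (2*j+2*k+3) : ℚ) / ((Nat.factorial j : ℚ) * (Nat.factorial (j+2*k+3) : ℚ)) := by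
    rw [Nat.cast_choose ℚ (by omega), show 2*j+2*k+3 - j = j+2*k+3 from by omega]
  have hc2 : (((2*j+2*k+1).choose j : ℚ)) =
      (Nat.factorial (2*j+2*k+1) : ℚ) / ((Nat.factorial j : ℚ) * (Nat.factorial (j+2*k+1) : ℚ)) := by
    rw [Nat.cast_choose ℚ (by omega), show 2*j+2*k+1 - j = j+2*k+1 from by omega]
  have hc3 : (((2*(j+k+1)+1).choose (j+1) : ℚ)) =
      (Nat.factorial (2*j+2*k+3) : ℚ) / ((Nat.factorial (j+1) : ℚ) * (Nat.factorial (j+2*k+2) : ℚ)) := by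
    rw [Nat.cast_choose ℚ (by omega), show 2*(j+k+1)+1 - (j+1) = j+2*k+2 from by omega,
      show 2*(j+k+1)+1 = 2*j+2*k+3 from by omega]
  have hc4 : (((2*(j+k+1)+1).choose j : ℚ)) = (((2*j+2*k+3).choose j : ℚ)) := by
    congr 2; omega
  have e1 : (Nat.factorial (2*j+2*k+3) : ℚ)
      = (2*(j:ℚ)+2*k+3)*(2*(j:ℚ)+2*k+2)*(Nat.factorial (2*j+2*k+1) : ℚ) := by
    rw [show 2*j+2*k+3 = (2*j+2*k+1)+1+1 by omega, Nat.factorial_succ, Nat.factorial_succ]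
    push_cast; ring
  have e2 : (Nat.factorial (j+2*k+3) : ℚ)
      = ((j:ℚ)+2*k+3)*((j:ℚ)+2*k+2)*(Nat.factorial (j+2*k+1) : ℚ) := by
    rw [show j+2*k+3 = (j+2*k+1)+1+1 by omega, Nat.factorial_succ, Nat.factorial_succ]
    push_cast; ring
  have e3 : (Nat.factorial (j+2*k+2) : ℚ)
      = ((j:ℚ)+2*k+2)*(Nat.factorial (j+2*k+1) : ℚ) := by
    rw [show j+2*k+2 = (j+2*k+1)+1 by omega, Nat.factorial_succ]
    push_cast; ring
  have e4 : (Nat.factorial (j+1) : ℚ) = ((j:ℚ)+1)*(Nat.factorial j : ℚ) := by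
    rw [Nat.factorial_succ]; push_cast; ring
  rw [hc4, hc3, hc1, hc2, e1, e2, e3, e4]
  have h1 := (e (2*j+2*k+1)).ne'
  have h2 := (e j).ne'
  have h3 := (e (j+2*k+1)).ne'
  have p1 : ((j:ℚ)+2*k+3) ≠ 0 := by positivity
  have p2 : ((j:ℚ)+2*k+2) ≠ 0 := by positivity
  have p3 : ((j:ℚ)+1) ≠ 0 := by positivity
  have p4 : (2*(k:ℚ)+3) ≠ 0 := by positivity
  have p5 : (2*(k:ℚ)+1) ≠ 0 := by positivity
  have p6 : (2*(j:ℚ)+2*k+3) ≠ 0 := by positivity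
  have p7 : (2*((j:ℚ)+k+1)+1) ≠ 0 := by positivity
  have p8 : (2*((j:ℚ)+(k:ℚ)+1)+1-2*((j:ℚ)+1)) = 2*k+1 := by push_cast; ring
  have p9 : (2*((j:ℚ)+(k:ℚ)+1)+1-2*(j:ℚ)) = 2*k+3 := by ring
  push_cast
  rw [p8, p9]
  field_simp
  ring

lemma key (p : ℕ) :
    (2*(p:ℚ)+3) * (∑ j ∈ Finset.range (p+2), ((2*p+3).choose j : ℚ) / (2*(p:ℚ)+3-2*j))
      - (8*(p:ℚ)+8) * (∑ j ∈ Finset.range (p+1), ((2*p+1).choose j : ℚ) / (2*(p:ℚ)+1-2*j))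
    = ((2*p+2).choose (p+1) : ℚ) := by
  rw [Finset.sum_range_succ, mul_add, Finset.mul_sum, Finset.mul_sum, add_sub_right_comm,
    ← Finset.sum_sub_distrib]
  have hsum : ∀ j ∈ Finset.range (p+1),
      (2*(p:ℚ)+3) * (((2*p+3).choose j : ℚ) / (2*(p:ℚ)+3-2*j))
        - (8*(p:ℚ)+8) * (((2*p+1).choose j : ℚ) / (2*(p:ℚ)+1-2*j))
      = f (p+1) (j+1) - f (p+1) j := by
    intro j hj
    rw [Finset.mem_range] at hj
    obtain ⟨k, hk⟩ : ∃ k, p = j + k := ⟨p - j, by omega⟩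
    subst hk
    have := term_id j k
    rw [show 2*(j+k)+3 = 2*j+2*k+3 from by omega, show 2*(j+k)+1 = 2*j+2*k+1 from by omega,
      show j+k+1 = (j+k)+1 from rfl] at *
    push_cast at this ⊢
    rw [show 2*((j:ℚ)+k)+3-2*j = 2*(k:ℚ)+3 from by ring,
      show 2*((j:ℚ)+k)+1-2*j = 2*(k:ℚ)+1 from by ring]
    rw [← this]; ring
  rw [Finset.sum_congr rfl hsum, Finset.sum_range_sub (f (p+1))]
  have hf0 : f (p+1) 0 = 0 := by simp [f]
  have hA : (((2*p+3).choose (p+1) : ℚ)) =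
      (Nat.factorial (2*p+3) : ℚ) / ((Nat.factorial (p+1) : ℚ) * (Nat.factorial (p+2) : ℚ)) := by
    rw [Nat.cast_choose ℚ (by omega), show 2*p+3 - (p+1) = p+2 from by omega]
  have hB : (((2*p+2).choose (p+1) : ℚ)) =
      (Nat.factorial (2*p+2) : ℚ) / ((Nat.factorial (p+1) : ℚ) * (Nat.factorial (p+1) : ℚ)) := by
    rw [Nat.cast_choose ℚ (by omega), show 2*p+2 - (p+1) = p+1 from by omega]
  have e1 : (Nat.factorial (2*p+3) : ℚ) = (2*(p:ℚ)+3) * (Nat.factorial (2*p+2) : ℚ) := by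
    rw [show 2*p+3 = (2*p+2)+1 from by omega, Nat.factorial_succ]; push_cast; ring
  have e2 : (Nat.factorial (p+2) : ℚ) = ((p:ℚ)+2) * (Nat.factorial (p+1) : ℚ) := by
    rw [show p+2 = (p+1)+1 from by omega, Nat.factorial_succ]; push_cast; ring
  have hfp : f (p+1) (p+1) =
      -(((2*p+3).choose (p+1) : ℚ)) * ((p:ℚ)+1) * (4*(p:ℚ)+7) / (2*(p:ℚ)+3) := by
    unfold f
    rw [show 2*(p+1)+1 = 2*p+3 from by omega]
    push_cast
    rw [show (2*((p:ℚ)+1)+1-2*((p:ℚ)+1)) = 1 from by ring]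
    ring_nf
  rw [hf0, hfp, hA, hB, e1, e2]
  have h1 : (0:ℚ) < (Nat.factorial (2*p+2) : ℚ) := by exact_mod_cast (2*p+2).factorial_pos
  have h2 : (0:ℚ) < (Nat.factorial (p+1) : ℚ) := by exact_mod_cast (p+1).factorial_pos
  push_cast
  rw [show (2*((p:ℚ))+3-2*((p:ℚ)+1)) = 1 from by ring]
  field_simp
  ring


theorem stmt_2 (n : ℕ) (hn : 2 ≤ n) (he : Even n) :
    ((n : ℚ) + 2) * a (n + 2) * b n - (n : ℚ) * a n * b (n - 2) = (a n) ^ 2 := by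
  obtain ⟨p, rfl⟩ : ∃ p, n = 2*p+2 := by
    obtain ⟨m, hm⟩ := he; exact ⟨m-1, by omega⟩
  have hb1 : b (2*p+2) = (1/2^(2*p+2)) *
      ∑ j ∈ Finset.range (p+2), ((2*p+3).choose j : ℚ) / (2*(p:ℚ)+3-2*j) := by
    unfold b
    rw [show (2*p+2)/2 = p+1 from by omega, show 2*p+2+1 = 2*p+3 from by omega]
    congr 1
    refine Finset.sum_congr rfl fun j _ => ?_
    congr 1
    push_cast; ring
  have hb2 : b (2*p+2-2) = (1/2^(2*p)) *
      ∑ j ∈ Finset.range (p+1), ((2*p+1).choose j : ℚ) / (2*(p:ℚ)+1-2*j) := by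
    rw [show 2*p+2-2 = 2*p from by omega]
    unfold b
    rw [show (2*p)/2 = p from by omega]
    congr 1
    refine Finset.sum_congr rfl fun j _ => ?_
    congr 1
    push_cast; ring
  have ha1 : a (2*p+2) = ((2*p+2).choose (p+1) : ℚ) / 2^(2*p+2) := by
    unfold a; rw [show (2*p+2)/2 = p+1 from by omega]
  have ha2 : a (2*p+2+2) = ((2*p+4).choose (p+2) : ℚ) / 2^(2*p+4) := by
    unfold a; rw [show 2*p+2+2 = 2*p+4 from by omega, show (2*p+4)/2 = p+2 from by omega]
  have hch : (2*(p:ℚ)+4) * ((2*p+4).choose (p+2) : ℚ)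
      = 4*(2*(p:ℚ)+3) * ((2*p+2).choose (p+1) : ℚ) := by
    have hA : (((2*p+4).choose (p+2) : ℚ)) =
        (Nat.factorial (2*p+4) : ℚ) / ((Nat.factorial (p+2) : ℚ) * (Nat.factorial (p+2) : ℚ)) := by
      rw [Nat.cast_choose ℚ (by omega), show 2*p+4 - (p+2) = p+2 from by omega]
    have hB : (((2*p+2).choose (p+1) : ℚ)) =
        (Nat.factorial (2*p+2) : ℚ) / ((Nat.factorial (p+1) : ℚ) * (Nat.factorial (p+1) : ℚ)) := by
      rw [Nat.cast_choose ℚ (by omega), show 2*p+2 - (p+1) = p+1 from by omega]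
    have e1 : (Nat.factorial (2*p+4) : ℚ)
        = (2*(p:ℚ)+4)*(2*(p:ℚ)+3)*(Nat.factorial (2*p+2) : ℚ) := by
      rw [show 2*p+4 = (2*p+2)+1+1 from by omega, Nat.factorial_succ, Nat.factorial_succ]
      push_cast; ring
    have e2 : (Nat.factorial (p+2) : ℚ) = ((p:ℚ)+2)*(Nat.factorial (p+1) : ℚ) := by
      rw [show p+2 = (p+1)+1 from by omega, Nat.factorial_succ]; push_cast; ring
    have h1 : (0:ℚ) < (Nat.factorial (2*p+2) : ℚ) := by exact_mod_cast (2*p+2).factorial_pos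
    have h2 : (0:ℚ) < (Nat.factorial (p+1) : ℚ) := by exact_mod_cast (p+1).factorial_pos
    rw [hA, hB, e1, e2]
    have p2 : ((p:ℚ)+2) ≠ 0 := by positivity
    field_simp
    ring
  have hk := key p
  rw [hb1, hb2, ha1, ha2]
  set S := ∑ j ∈ Finset.range (p+2), ((2*p+3).choose j : ℚ) / (2*(p:ℚ)+3-2*j) with hS
  set T := ∑ j ∈ Finset.range (p+1), ((2*p+1).choose j : ℚ) / (2*(p:ℚ)+1-2*j) with hT
  push_cast
  linear_combination
    (S / (64 * ((2:ℚ)^(2*p))^2)) * hch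
      + ((((2*p+2).choose (p+1) : ℚ)) / (16 * ((2:ℚ)^(2*p))^2)) * hk
end

section
/- The series Σ_{k=1}^{∞} a_{2k}^2/(2k+1), with a_{2k} := 2^{-2k} C(2k,k), converges, and for N → ∞ one has Σ_{k=N+1}^{∞} a_{2k}^2/(2k+1) = 1/(π(2N+1)) + O((log N)/N^2). -/
/-- `a (2k) = binomial(2k, k) / 4^k` as a real number. -/
noncomputable def a2 (k : ℕ) : ℝ := ((2 * k).choose k : ℝ) / 4 ^ k

lemma a2_pos (n : ℕ) : 0 < a2 n := by
  unfold a2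
  have : 0 < (2*n).choose n := Nat.choose_pos (by omega)
  positivity

lemma a2_succ (n : ℕ) : a2 (n+1) = a2 n * ((2*n+1)/(2*n+2)) := by
  have h := Nat.succ_mul_centralBinom_succ n
  have h2 : ((n:ℝ)+1) * ((2*(n+1)).choose (n+1) : ℝ) = 2 * (2*n+1) * ((2*n).choose n : ℝ) := by
    have := congrArg (Nat.cast : ℕ → ℝ) h
    push_cast [Nat.centralBinom] at this
    push_cast
    linarith [this]
  unfold a2
  have hn1 : ((n:ℝ)+1) ≠ 0 := by positivity
  field_simp
  push_cast
  linear_combination (2*(4:ℝ)^n) * h2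

/-- `c n = (2n+1) a2(n)^2`, decreasing to `2/π`. -/
noncomputable def cseq (n : ℕ) : ℝ := (2*n+1) * a2 n ^ 2

lemma cseq_pos (n : ℕ) : 0 < cseq n := by
  unfold cseq
  have := a2_pos n
  positivity

lemma cseq_succ_le (n : ℕ) : cseq (n+1) ≤ cseq n := by
  unfold cseq
  rw [a2_succ]
  have h1 : (0:ℝ) < 2*n+2 := by positivity
  have h2 : (0:ℝ) ≤ a2 n ^ 2 := sq_nonneg _
  rw [mul_pow, div_pow]
  push_cast
  rw [show (2*((n:ℝ)+1)+1) * (a2 n^2 * ((2*(n:ℝ)+1)^2/(2*(n:ℝ)+2)^2))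
      = ((2*(n:ℝ)+1+2)*(2*(n:ℝ)+1)^2*a2 n^2)/(2*(n:ℝ)+2)^2 from by ring,
    div_le_iff₀ (by positivity)]
  nlinarith [sq_nonneg (a2 n)]

lemma cseq_eq_inv_W (n : ℕ) : cseq n = (Real.Wallis.W n)⁻¹ := by
  induction n with
  | zero => simp [cseq, a2, Real.Wallis.W]
  | succ n ih =>
    rw [Real.Wallis.W_succ, mul_inv, ← ih]
    unfold cseq
    rw [a2_succ, mul_pow, div_pow]
    have h1 : (0:ℝ) < 2*n+1 := by positivity
    have h2 : (0:ℝ) < 2*n+2 := by positivity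
    have h3 : (0:ℝ) < 2*n+3 := by positivity
    push_cast
    field_simp
    ring

lemma cseq_tendsto : Filter.Tendsto cseq Filter.atTop (nhds (2/Real.pi)) := by
  have h0 : (2:ℝ)/Real.pi = (Real.pi/2)⁻¹ := by
    rw [div_eq_iff Real.pi_ne_zero] at *
    field_simp
  rw [h0]
  have := (Real.Wallis.tendsto_W_nhds_pi_div_two).inv₀ (by positivity : (Real.pi/2) ≠ 0)
  exact this.congr (fun n => (cseq_eq_inv_W n).symm)

lemma cseq_anti : Antitone cseq :=
  antitone_nat_of_succ_le cseq_succ_le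

lemma cseq_ge (n : ℕ) : 2/Real.pi ≤ cseq n := by
  refine le_of_tendsto cseq_tendsto ?_
  filter_upwards [Filter.eventually_ge_atTop n] with m hm
  exact cseq_anti hm

lemma a2_sq_le (n : ℕ) : a2 n ^ 2 ≤ 1 / (2*n+1) := by
  have h := cseq_anti (Nat.zero_le n)
  have h0 : cseq 0 = 1 := by simp [cseq, a2]
  rw [h0] at h
  unfold cseq at h
  rw [le_div_iff₀ (by positivity)]
  linarith

lemma a2_sq_tendsto : Filter.Tendsto (fun n : ℕ => a2 n ^ 2) Filter.atTop (nhds 0) := by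
  have hub : Filter.Tendsto (fun n : ℕ => 1 / (2*(n:ℝ)+1)) Filter.atTop (nhds 0) := by
    apply Filter.Tendsto.div_atTop tendsto_const_nhds
    apply Filter.Tendsto.atTop_add _ tendsto_const_nhds
    exact (tendsto_natCast_atTop_atTop).const_mul_atTop two_pos
  refine tendsto_of_tendsto_of_tendsto_of_le_of_le tendsto_const_nhds hub
    (fun n => sq_nonneg _) (fun n => a2_sq_le n)

/-- `p n = (n+1/4) a2(n)^2` is increasing with limit `1/π`. -/
noncomputable def pseq (n : ℕ) : ℝ := ((n:ℝ)+1/4) * a2 n ^ 2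

lemma pseq_mono : Monotone pseq := by
  apply monotone_nat_of_le_succ
  intro n
  unfold pseq
  rw [a2_succ, mul_pow, div_pow]
  push_cast
  rw [show ((n:ℝ)+1+1/4) * (a2 n^2 * ((2*(n:ℝ)+1)^2/(2*(n:ℝ)+2)^2))
      = (((n:ℝ)+1+1/4)*(2*(n:ℝ)+1)^2*a2 n^2)/(2*(n:ℝ)+2)^2 from by ring,
    le_div_iff₀ (by positivity)]
  nlinarith [sq_nonneg (a2 n), Nat.cast_nonneg (α := ℝ) n]

lemma pseq_tendsto : Filter.Tendsto pseq Filter.atTop (nhds (1/Real.pi)) := by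
  have h : ∀ n : ℕ, pseq n = cseq n / 2 - a2 n ^ 2 / 4 := by
    intro n; unfold pseq cseq; ring
  have := (cseq_tendsto.div_const 2).sub (a2_sq_tendsto.div_const 4)
  simp only [zero_div, sub_zero] at this
  refine Filter.Tendsto.congr (fun n => (h n).symm) ?_
  convert this using 2
  ring

lemma pseq_le (n : ℕ) : pseq n ≤ 1/Real.pi := by
  refine ge_of_tendsto pseq_tendsto ?_
  filter_upwards [Filter.eventually_ge_atTop n] with m hm
  exact pseq_mono hm

/-- `q n = (n+1/4+1/(8n)) a2(n)^2` is decreasing (n ≥ 1) with limit `1/π`. -/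
noncomputable def qseq (n : ℕ) : ℝ := ((n:ℝ)+1/4+1/(8*n)) * a2 n ^ 2

lemma qseq_succ_le {n : ℕ} (hn : 1 ≤ n) : qseq (n+1) ≤ qseq n := by
  unfold qseq
  rw [a2_succ, mul_pow, div_pow]
  have hn' : (1:ℝ) ≤ (n:ℝ) := by exact_mod_cast hn
  have h8 : (0:ℝ) < 8*n := by positivity
  have h8' : (0:ℝ) < 8*(n+1) := by positivity
  push_cast
  rw [show ((n:ℝ)+1+1/4+1/(8*((n:ℝ)+1))) * (a2 n^2 * ((2*(n:ℝ)+1)^2/(2*(n:ℝ)+2)^2))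
      = (((n:ℝ)+1+1/4+1/(8*((n:ℝ)+1)))*(2*(n:ℝ)+1)^2*a2 n^2)/(2*(n:ℝ)+2)^2 from by ring,
    div_le_iff₀ (by positivity)]
  have goal' : ((n:ℝ)+1+1/4+1/(8*((n:ℝ)+1)))*(2*(n:ℝ)+1)^2
      ≤ ((n:ℝ)+1/4+1/(8*(n:ℝ)))*(2*(n:ℝ)+2)^2 := by
    rw [← sub_nonneg]
    have hd : ((n:ℝ)+1/4+1/(8*(n:ℝ)))*(2*(n:ℝ)+2)^2
        - ((n:ℝ)+1+1/4+1/(8*((n:ℝ)+1)))*(2*(n:ℝ)+1)^2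
        = (6*(n:ℝ)^2+9*(n:ℝ)+4)/(8*(n:ℝ)*((n:ℝ)+1)) := by
      field_simp
      ring
    rw [hd]
    positivity
  nlinarith [mul_le_mul_of_nonneg_right goal' (sq_nonneg (a2 n))]

lemma qseq_tendsto : Filter.Tendsto qseq Filter.atTop (nhds (1/Real.pi)) := by
  have h2 : Filter.Tendsto (fun n : ℕ => a2 n ^ 2 / (8*n)) Filter.atTop (nhds 0) := by
    refine tendsto_of_tendsto_of_tendsto_of_le_of_le' tendsto_const_nhds a2_sq_tendsto
      ?_ ?_
    · filter_upwards [Filter.eventually_ge_atTop 1] with n hn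
      have : (0:ℝ) < 8*n := by positivity
      positivity
    · filter_upwards [Filter.eventually_ge_atTop 1] with n hn
      have h1 : (1:ℝ) ≤ (n:ℝ) := by exact_mod_cast hn
      have : (1:ℝ) ≤ 8*(n:ℝ) := by linarith
      calc a2 n ^2 / (8*(n:ℝ)) ≤ a2 n ^2 / 1 :=
            div_le_div_of_nonneg_left (sq_nonneg _) one_pos this
        _ = a2 n ^ 2 := div_one _
  have h : ∀ n : ℕ, qseq n = pseq n + a2 n ^ 2 / (8*n) := by
    intro n; unfold qseq pseq; ring
  have := pseq_tendsto.add h2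
  rw [add_zero] at this
  exact this.congr (fun n => (h n).symm)

lemma qseq_ge {n : ℕ} (hn : 1 ≤ n) : 1/Real.pi ≤ qseq n := by
  refine le_of_tendsto qseq_tendsto ?_
  filter_upwards [Filter.eventually_ge_atTop n] with m hm
  induction m, hm using Nat.le_induction with
  | base => exact le_refl _
  | succ m hm ih => exact le_trans (qseq_succ_le (le_trans hn hm)) ih

/-- telescoping sums -/
lemma hasSum_telescope {g : ℕ → ℝ} {L : ℝ} (hanti : ∀ n, g (n+1) ≤ g n)
    (hlim : Filter.Tendsto g Filter.atTop (nhds L)) :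
    HasSum (fun k => g k - g (k+1)) (g 0 - L) := by
  have hganti : Antitone g := antitone_nat_of_succ_le hanti
  have hgL : ∀ n, L ≤ g n := by
    intro n
    refine le_of_tendsto hlim ?_
    filter_upwards [Filter.eventually_ge_atTop n] with m hm
    exact hganti hm
  have hpart : ∀ n, ∑ k ∈ Finset.range n, (g k - g (k+1)) = g 0 - g n := by
    intro n; exact Finset.sum_range_sub' g n
  have hsummable : Summable (fun k => g k - g (k+1)) := by
    apply summable_of_sum_range_le (c := g 0 - L)
    · intro n; linarith [hanti n]
    · intro n; rw [hpart]; linarith [hgL n]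
  have ht : Filter.Tendsto (fun n => ∑ k ∈ Finset.range n, (g k - g (k+1)))
      Filter.atTop (nhds (g 0 - L)) := by
    simp only [hpart]
    exact tendsto_const_nhds.sub hlim
  have := hsummable.hasSum
  rwa [tendsto_nhds_unique this.tendsto_sum_nat ht] at this

noncomputable def F (k : ℕ) : ℝ := a2 k ^ 2 / (2*k+1)
noncomputable def rseq (k : ℕ) : ℝ := F k - (cseq k - cseq (k+1))
noncomputable def sseq (k : ℕ) : ℝ := 1/((2*k)*(2*k+2))

lemma rseq_eq (k : ℕ) :
    rseq k = a2 k ^ 2 * (4*k+3) / ((2*k+1)*(2*k+2)^2) := by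
  unfold rseq F cseq
  rw [a2_succ, mul_pow, div_pow]
  have h1 : (0:ℝ) < 2*k+1 := by positivity
  have h2 : (0:ℝ) < 2*k+2 := by positivity
  push_cast
  field_simp
  ring

lemma rseq_nonneg (k : ℕ) : 0 ≤ rseq k := by
  rw [rseq_eq]
  positivity

lemma rseq_le {k : ℕ} (hk : 1 ≤ k) : rseq k ≤ sseq k - sseq (k+1) := by
  rw [rseq_eq]
  unfold sseq
  have hk' : (1:ℝ) ≤ (k:ℝ) := by exact_mod_cast hk
  have h1 : (0:ℝ) < 2*k+1 := by positivity
  have h2 : (0:ℝ) < 2*k+2 := by positivity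
  have h3 : (0:ℝ) < 2*k := by linarith
  have h4 : (0:ℝ) < 2*k+4 := by linarith
  have hd : 1/((2*(k:ℝ))*(2*(k:ℝ)+2)) - 1/((2*((k:ℝ)+1))*(2*((k:ℝ)+1)+2))
      = 4/((2*(k:ℝ))*(2*(k:ℝ)+2)*(2*(k:ℝ)+4)) := by
    field_simp
    ring
  push_cast
  rw [hd]
  have hx := a2_sq_le k
  push_cast at hx
  rw [div_le_div_iff₀ (by positivity) (by positivity)]
  have step : a2 k ^2 * (4*(k:ℝ)+3) ≤ (4*(k:ℝ)+3)/(2*(k:ℝ)+1) := by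
    rw [div_eq_mul_one_div, mul_comm (4*(k:ℝ)+3)]
    have h43 : (0:ℝ) ≤ 4*(k:ℝ)+3 := by positivity
    exact mul_le_mul_of_nonneg_right hx h43
  calc a2 k ^2 * (4*(k:ℝ)+3) * (2*(k:ℝ)*(2*(k:ℝ)+2)*(2*(k:ℝ)+4))
      ≤ (4*(k:ℝ)+3)/(2*(k:ℝ)+1) * (2*(k:ℝ)*(2*(k:ℝ)+2)*(2*(k:ℝ)+4)) := by
        apply mul_le_mul_of_nonneg_right step (by positivity)
    _ ≤ 4*((2*(k:ℝ)+1)*(2*(k:ℝ)+2)^2) := by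
        rw [div_mul_eq_mul_div, div_le_iff₀ h1]
        have c0 : (0:ℝ) ≤ (k:ℝ) := Nat.cast_nonneg k
        nlinarith [pow_nonneg c0 4, pow_nonneg c0 3, pow_nonneg c0 2, c0]

lemma sseq_nonneg (k : ℕ) : 0 ≤ sseq k := by
  unfold sseq; positivity

lemma sseq_anti {k : ℕ} (hk : 1 ≤ k) : sseq (k+1) ≤ sseq k := by
  unfold sseq
  have hk' : (1:ℝ) ≤ (k:ℝ) := by exact_mod_cast hk
  push_cast
  apply div_le_div_of_nonneg_left one_pos.le (by nlinarith)
  nlinarith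

lemma sseq_tendsto : Filter.Tendsto sseq Filter.atTop (nhds 0) := by
  unfold sseq
  apply Filter.Tendsto.div_atTop tendsto_const_nhds
  have h1 : Filter.Tendsto (fun k : ℕ => 2*(k:ℝ)) Filter.atTop Filter.atTop :=
    (tendsto_natCast_atTop_atTop).const_mul_atTop two_pos
  exact Filter.Tendsto.atTop_mul_atTop₀ h1 (h1.atTop_add tendsto_const_nhds)

lemma F_eq (k : ℕ) : F k = (cseq k - cseq (k+1)) + rseq k := by
  unfold rseq; ring

lemma summable_F : Summable F := by
  have h1 : Summable (fun k => cseq k - cseq (k+1)) :=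
    (hasSum_telescope cseq_succ_le cseq_tendsto).summable
  have h2 : Summable rseq := by
    rw [← summable_nat_add_iff 1]
    have htel : Summable (fun k => sseq (k+1) - sseq (k+1+1)) :=
      (hasSum_telescope (g := fun k => sseq (k+1))
        (fun n => sseq_anti (by omega))
        (sseq_tendsto.comp (Filter.tendsto_add_atTop_nat 1))).summable
    exact Summable.of_nonneg_of_le (fun k => rseq_nonneg _)
      (fun k => rseq_le (by omega)) htel
  exact (h1.add h2).congr (fun k => (F_eq k).symm)

lemma tail_hasSum (N : ℕ) (hN : 1 ≤ N) :
    ∃ R : ℝ, 0 ≤ R ∧ R ≤ sseq (N+1) ∧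
      HasSum (fun k => F (k + (N+1))) ((cseq (N+1) - 2/Real.pi) + R) := by
  have hctel : HasSum (fun k => cseq (k+(N+1)) - cseq (k+(N+1)+1))
      (cseq (N+1) - 2/Real.pi) := by
    have := hasSum_telescope (g := fun k => cseq (k+(N+1)))
      (fun n => by
        have := cseq_succ_le (n+(N+1))
        simpa [Nat.add_right_comm] using this)
      (cseq_tendsto.comp (Filter.tendsto_add_atTop_nat (N+1)))
    simpa [Nat.add_right_comm] using this
  have hstel : HasSum (fun k => sseq (k+(N+1)) - sseq (k+(N+1)+1))
      (sseq (N+1)) := by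
    have := hasSum_telescope (g := fun k => sseq (k+(N+1)))
      (fun n => by
        have := sseq_anti (k := n+(N+1)) (by omega)
        simpa [Nat.add_right_comm] using this)
      (sseq_tendsto.comp (Filter.tendsto_add_atTop_nat (N+1)))
    simpa [Nat.add_right_comm] using this
  have hrsummable : Summable (fun k => rseq (k+(N+1))) :=
    Summable.of_nonneg_of_le (fun k => rseq_nonneg _)
      (fun k => rseq_le (by omega)) hstel.summable
  refine ⟨∑' k, rseq (k+(N+1)), tsum_nonneg (fun k => rseq_nonneg _), ?_, ?_⟩
  · calc (∑' k, rseq (k+(N+1)))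
        ≤ ∑' k, (sseq (k+(N+1)) - sseq (k+(N+1)+1)) :=
          Summable.tsum_le_tsum (fun k => rseq_le (by omega)) hrsummable hstel.summable
      _ = sseq (N+1) := hstel.tsum_eq
  · have := hctel.add hrsummable.hasSum
    exact this.congr_fun (fun k => F_eq (k+(N+1)))

set_option maxHeartbeats 1600000 in
lemma cseq_bounds {N : ℕ} (hN : 3 ≤ N) :
    -(1/(N:ℝ)^2) ≤ cseq (N+1) - 2/Real.pi - 1/(Real.pi*(2*N+1)) ∧
    cseq (N+1) - 2/Real.pi - 1/(Real.pi*(2*N+1)) ≤ 0 := by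
  set t : ℝ := (N : ℝ) with hT
  have ht : (3:ℝ) ≤ t := by rw [hT]; exact_mod_cast hN
  set x : ℝ := a2 (N+1) ^ 2 with hX
  have hx0 : 0 ≤ x := sq_nonneg _
  have hπ : (0:ℝ) < Real.pi := Real.pi_pos
  have hπ3 : (3:ℝ) < Real.pi := Real.pi_gt_three
  have hc : cseq (N+1) = (2*t+3)*x := by
    unfold cseq; push_cast; ring
  have hp : (t+1+1/4)*x ≤ 1/Real.pi := by
    have := pseq_le (N+1); unfold pseq at this; push_cast at this
    convert this using 2 <;> push_cast <;> ring
  have hq : 1/Real.pi ≤ (t+1+1/4+1/(8*(t+1)))*x := by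
    have := qseq_ge (n := N+1) (by omega); unfold qseq at this; push_cast at this
    convert this using 2 <;> push_cast <;> ring
  have hp' : (t+1+1/4)*x*Real.pi ≤ 1 := (le_div_iff₀ hπ).mp hp
  have hq' : 1 ≤ (t+1+1/4+1/(8*(t+1)))*x*Real.pi := (div_le_iff₀ hπ).mp hq
  have hsum : 2/Real.pi + 1/(Real.pi*(2*t+1)) = (4*t+3)/(Real.pi*(2*t+1)) := by
    field_simp
    ring
  have hπx : 0 ≤ Real.pi * x := mul_nonneg hπ.le hx0
  constructor
  · -- lower bound
    have ht2 : (0:ℝ) < t^2 := by positivity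
    have ht1 : (0:ℝ) < t+1 := by linarith
    obtain ⟨u, hU⟩ : ∃ u:ℝ, u = 1/(8*(t+1)) := ⟨_, rfl⟩
    rw [← hU] at hq'
    have hu0 : 0 < u := by rw [hU]; positivity
    have hu : u*(8*(t+1)) = 1 := by
      rw [hU]; field_simp
    have hfact : (4*t+3)*u ≤ 5/4 := by nlinarith [hu, hu0, ht]
    have hx3 : Real.pi*x*(t+1) ≤ 1 := by nlinarith [hp', hπx]
    have step3 : 2*(Real.pi*x)*t^2 ≤ Real.pi*(2*t+1) := by
      nlinarith [mul_le_mul_of_nonneg_left hx3 (show (0:ℝ) ≤ 2*t by linarith), hπx, ht, hπ3]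
    have hlow : (4*t+3)/(Real.pi*(2*t+1)) ≤ (2*t+3)*x + 1/t^2 := by
      rw [div_le_iff₀ (by positivity)]
      have step1 : 4*t+3 ≤ (4*t+3)*((t+1+1/4+u)*x*Real.pi) := by
        nlinarith [mul_le_mul_of_nonneg_left hq' (show (0:ℝ) ≤ 4*t+3 by linarith)]
      have step2 : (4*t+3)*((t+1+1/4+u)*x*Real.pi)
          ≤ (2*t+3)*(2*t+1)*(Real.pi*x) + 2*(Real.pi*x) := by
        nlinarith [mul_le_mul_of_nonneg_right hfact hπx, hπx]
      have step3' : (2*t+3)*(2*t+1)*(Real.pi*x) + 2*(Real.pi*x)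
          ≤ ((2*t+3)*x + 1/t^2) * (Real.pi*(2*t+1)) := by
        have he : ((2*t+3)*x + 1/t^2) * (Real.pi*(2*t+1))
            = (2*t+3)*(2*t+1)*(Real.pi*x) + (Real.pi*(2*t+1))/t^2 := by
          field_simp
        rw [he]
        have : 2*(Real.pi*x) ≤ (Real.pi*(2*t+1))/t^2 := by
          rw [le_div_iff₀ ht2]
          linarith [step3]
        linarith
      linarith
    rw [hc]
    have := hsum
    linarith
  · -- upper bound
    have hup : cseq (N+1) ≤ 2/Real.pi + 1/(Real.pi*(2*t+1)) := by
      rw [hc, hsum, le_div_iff₀ (by positivity)]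
      nlinarith [mul_le_mul_of_nonneg_left hp' (show (0:ℝ) ≤ 4*t+3 by linarith), hπx]
    linarith

theorem stmt_6 :
    Summable (fun k : ℕ => (a2 k) ^ 2 / (2 * (k : ℝ) + 1)) ∧
    ∃ C : ℝ, ∃ N₀ : ℕ, ∀ N : ℕ, N₀ ≤ N →
      |(∑' k : ℕ, (a2 (k + N + 1)) ^ 2 / (2 * ((k : ℝ) + N + 1) + 1)) -
          1 / (Real.pi * (2 * (N : ℝ) + 1))| ≤
        C * Real.log N / (N : ℝ) ^ 2 := by
  constructor
  · exact summable_F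
  · refine ⟨1, 3, fun N hN => ?_⟩
    have hπ : (0:ℝ) < Real.pi := Real.pi_pos
    obtain ⟨R, hR0, hRs, hsum⟩ := tail_hasSum N (by omega)
    have htsum : (∑' k : ℕ, (a2 (k + N + 1)) ^ 2 / (2 * ((k : ℝ) + N + 1) + 1))
        = cseq (N+1) - 2/Real.pi + R := by
      rw [← hsum.tsum_eq]
      apply tsum_congr
      intro k
      show a2 (k+N+1) ^ 2 / (2 * ((k:ℝ) + N + 1) + 1) = F (k + (N+1))
      unfold F
      have : ((k + (N+1) : ℕ) : ℝ) = (k:ℝ) + N + 1 := by push_cast; ring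
      rw [this]
      norm_num [Nat.add_assoc]
    rw [htsum]
    obtain ⟨hlo, hhi⟩ := cseq_bounds hN
    have ht : (3:ℝ) ≤ (N:ℝ) := by exact_mod_cast hN
    have ht2 : (0:ℝ) < (N:ℝ)^2 := by positivity
    have hs : sseq (N+1) ≤ 1/(N:ℝ)^2 := by
      unfold sseq
      push_cast
      apply div_le_div_of_nonneg_left one_pos.le ht2
      nlinarith
    have hlog : 1 ≤ Real.log N := by
      rw [Real.le_log_iff_exp_le (by linarith)]
      calc Real.exp 1 ≤ 2.7182818286 := le_of_lt Real.exp_one_lt_d9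
        _ ≤ (N:ℝ) := by linarith
    have hfrac : 1/(N:ℝ)^2 ≤ 1 * Real.log N / (N:ℝ)^2 := by
      rw [one_mul]
      gcongr
    rw [abs_le]
    constructor
    · linarith
    · linarith
end
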